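/- Let G be a simple graph on n vertices with m edges, and let q_n(G) be the smallest eigenvalue of the signless Laplacian Q(G). Then the maximum cut satisfies mcut(G) ≤ m - n·q_n(G)/4. -/

import Mathlib

open Finset Matrix BigOperators

set_option linter.unusedSectionVars false

variable {V : Type*} [Fintype V] [DecidableEq V]

/-- Number of edges of `G` with exactly one endpoint in `S` (each unordered edge counted once,
as the ordered pair going out of `S`). -/
def cutNum (G : SimpleGraph V) [DecidableRel G.Adj] (S : Finset V) : ℕ :=
  (Finset.univ.filter (fun p : V × V => G.Adj p.1 p.2 ∧ p.1 ∈ S ∧ p.2 ∉ S)).card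

/-- Number of edges of `G` with both endpoints in `S` or both outside `S`. -/
def cohNum (G : SimpleGraph V) [DecidableRel G.Adj] (S : Finset V) : ℕ :=
  G.edgeFinset.card - cutNum G S

/-- The maximum cut of `G`. -/
def mcut (G : SimpleGraph V) [DecidableRel G.Adj] : ℕ :=
  Finset.univ.sup (fun S : Finset V => cutNum G S)

/-- The ±1 partition vector of a vertex subset `S`. -/
def pvec (S : Finset V) : V → ℝ := fun v => if v ∈ S then 1 else -1

/-- The signless Laplacian matrix `Q = D + A` of a graph. -/
def signlessLap (G : SimpleGraph V) [DecidableRel G.Adj] : Matrix V V ℝ :=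
  G.degMatrix ℝ + G.adjMatrix ℝ

lemma isHermitian_adj (G : SimpleGraph V) [DecidableRel G.Adj] :
    (G.adjMatrix ℝ).IsHermitian := by
  rw [IsHermitian, conjTranspose_eq_transpose_of_trivial]
  exact SimpleGraph.isSymm_adjMatrix G

lemma isHermitian_lap (G : SimpleGraph V) [DecidableRel G.Adj] :
    (G.lapMatrix ℝ).IsHermitian := by
  rw [IsHermitian, conjTranspose_eq_transpose_of_trivial]
  exact SimpleGraph.isSymm_lapMatrix (G := G) (R := ℝ)

lemma isHermitian_signlessLap (G : SimpleGraph V) [DecidableRel G.Adj] :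
    (signlessLap G).IsHermitian := by
  rw [IsHermitian, conjTranspose_eq_transpose_of_trivial]
  exact (SimpleGraph.isSymm_degMatrix (G := G) (R := ℝ)).add (SimpleGraph.isSymm_adjMatrix G)

/-- The spanning subgraph of `G` consisting of the edges between `S` and its complement. -/
def crossGraph (G : SimpleGraph V) (S : Finset V) : SimpleGraph V where
  Adj u v := G.Adj u v ∧ ((u ∈ S) ↔ (v ∉ S))
  symm := ⟨fun u v h => ⟨h.1.symm, by tauto⟩⟩
  loopless := ⟨fun v h => G.loopless.irrefl v h.1⟩

/-- The spanning subgraph of `G` consisting of the edges inside `S` or inside its complement. -/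
def insideGraph (G : SimpleGraph V) (S : Finset V) : SimpleGraph V where
  Adj u v := G.Adj u v ∧ ((u ∈ S) ↔ (v ∈ S))
  symm := ⟨fun u v h => ⟨h.1.symm, h.2.symm⟩⟩
  loopless := ⟨fun v h => G.loopless.irrefl v h.1⟩

instance (G : SimpleGraph V) [DecidableRel G.Adj] (S : Finset V) :
    DecidableRel (crossGraph G S).Adj := fun _ _ => inferInstanceAs (Decidable (_ ∧ _))

instance (G : SimpleGraph V) [DecidableRel G.Adj] (S : Finset V) :
    DecidableRel (insideGraph G S).Adj := fun _ _ => inferInstanceAs (Decidable (_ ∧ _))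

/-- The second largest value (with multiplicity) of a finitely indexed family of reals. -/
noncomputable def secondLargest (f : V → ℝ) : ℝ :=
  (Multiset.sort (Finset.univ.val.map f) (· ≤ ·)).getD (Fintype.card V - 2) 0

/-- The join of two graphs: disjoint union plus all edges in between. -/
def joinGraph {α β : Type*} (H₁ : SimpleGraph α) (H₂ : SimpleGraph β) :
    SimpleGraph (α ⊕ β) where
  Adj x y :=
    match x, y with
    | Sum.inl u, Sum.inl v => H₁.Adj u v
    | Sum.inr u, Sum.inr v => H₂.Adj u v
    | Sum.inl _, Sum.inr _ => True
    | Sum.inr _, Sum.inl _ => True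
  symm := ⟨by rintro (u | u) (v | v) h <;> first | exact h.symm | trivial⟩
  loopless := ⟨by
    rintro (u | u) h
    · exact H₁.loopless.irrefl u h
    · exact H₂.loopless.irrefl u h⟩

instance {α β : Type*} (H₁ : SimpleGraph α) (H₂ : SimpleGraph β)
    [DecidableRel H₁.Adj] [DecidableRel H₂.Adj] :
    DecidableRel (joinGraph H₁ H₂).Adj := fun x y =>
  match x, y with
  | Sum.inl u, Sum.inl v => inferInstanceAs (Decidable (H₁.Adj u v))
  | Sum.inr u, Sum.inr v => inferInstanceAs (Decidable (H₂.Adj u v))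
  | Sum.inl _, Sum.inr _ => inferInstanceAs (Decidable True)
  | Sum.inr _, Sum.inl _ => inferInstanceAs (Decidable True)

lemma rayleigh_min [Nonempty V] {A : Matrix V V ℝ} (hA : A.IsHermitian) (x : V → ℝ) :
    (⨅ i, hA.eigenvalues i) * (x ⬝ᵥ x) ≤ x ⬝ᵥ A *ᵥ x := by
  set c := ⨅ i, hA.eigenvalues i with hc
  have hle : ∀ i, c ≤ hA.eigenvalues i := fun i =>
    ciInf_le (Set.Finite.bddBelow (Set.finite_range _)) i
  set U : Matrix V V ℝ := (Matrix.IsHermitian.eigenvectorUnitary hA : Matrix V V ℝ)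
  have hU : U * Uᴴ = 1 := Matrix.mem_unitaryGroup_iff.mp (Matrix.IsHermitian.eigenvectorUnitary hA).2
  have hdecomp : A - c • (1 : Matrix V V ℝ)
      = U * Matrix.diagonal (fun i => hA.eigenvalues i - c) * Uᴴ := by
    have hspec := hA.spectral_theorem
    rw [Unitary.conjStarAlgAut_apply, Matrix.star_eq_conjTranspose] at hspec
    have h1 : c • (1 : Matrix V V ℝ) = U * (c • (1 : Matrix V V ℝ)) * Uᴴ := by
      rw [Matrix.mul_smul, Matrix.smul_mul, Matrix.mul_one, hU]
    have hdiag : Matrix.diagonal (RCLike.ofReal ∘ hA.eigenvalues) - c • (1 : Matrix V V ℝ)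
        = Matrix.diagonal (fun i => hA.eigenvalues i - c) := by
      ext i j
      by_cases h : i = j <;>
        simp [Matrix.diagonal, Matrix.one_apply, h, RCLike.ofReal]
    calc A - c • (1 : Matrix V V ℝ)
        = U * Matrix.diagonal (RCLike.ofReal ∘ hA.eigenvalues) * Uᴴ
          - U * (c • (1 : Matrix V V ℝ)) * Uᴴ := by
          rw [← hspec, ← h1]
      _ = U * (Matrix.diagonal (RCLike.ofReal ∘ hA.eigenvalues) - c • (1 : Matrix V V ℝ)) * Uᴴ := by
          rw [Matrix.mul_sub, Matrix.sub_mul]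
      _ = U * Matrix.diagonal (fun i => hA.eigenvalues i - c) * Uᴴ := by rw [hdiag]
  have hpsd : Matrix.PosSemidef (A - c • (1 : Matrix V V ℝ)) := by
    rw [hdecomp]
    exact (Matrix.posSemidef_diagonal_iff.mpr fun i => sub_nonneg.mpr (hle i)).mul_mul_conjTranspose_same U
  have h0 := hpsd.re_dotProduct_nonneg x
  simp only [star_trivial, RCLike.re_to_real] at h0
  rw [Matrix.sub_mulVec, dotProduct_sub, Matrix.smul_mulVec, Matrix.one_mulVec,
    dotProduct_smul, smul_eq_mul] at h0
  linarith

lemma cutNum_swap (G : SimpleGraph V) [DecidableRel G.Adj] (S : Finset V) :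
    (Finset.univ.filter (fun p : V × V => G.Adj p.1 p.2 ∧ p.1 ∉ S ∧ p.2 ∈ S)).card
      = cutNum G S := by
  apply Finset.card_bij' (fun p _ => Prod.swap p) (fun p _ => Prod.swap p)
  · intro p hp
    simp only [Finset.mem_filter, Finset.mem_univ, true_and] at hp ⊢
    exact ⟨hp.1.symm, hp.2.2, hp.2.1⟩
  · intro p hp
    simp only [cutNum, Finset.mem_filter, Finset.mem_univ, true_and] at hp ⊢
    exact ⟨hp.1.symm, hp.2.2, hp.2.1⟩
  · intro p _; simp
  · intro p _; simp

lemma card_adj_pairs (G : SimpleGraph V) [DecidableRel G.Adj] :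
    (Finset.univ.filter (fun p : V × V => G.Adj p.1 p.2)).card = 2 * G.edgeFinset.card := by
  rw [← SimpleGraph.sum_degrees_eq_twice_card_edges]
  rw [Finset.card_filter, ← Finset.univ_product_univ, Finset.sum_product]
  congr 1
  funext i
  rw [← SimpleGraph.card_neighborFinset_eq_degree, SimpleGraph.neighborFinset_eq_filter,
    Finset.card_filter]

lemma quad_eq (G : SimpleGraph V) [DecidableRel G.Adj] (S : Finset V) :
    pvec S ⬝ᵥ (signlessLap G) *ᵥ pvec S
      = 4 * (G.edgeFinset.card : ℝ) - 4 * (cutNum G S : ℝ) := by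
  rw [signlessLap, Matrix.add_mulVec, dotProduct_add,
    SimpleGraph.dotProduct_mulVec_degMatrix, SimpleGraph.dotProduct_mulVec_adjMatrix]
  have h1 : ∑ i : V, (G.degree i : ℝ) * pvec S i * pvec S i = 2 * (G.edgeFinset.card : ℝ) := by
    have : ∀ i : V, (G.degree i : ℝ) * pvec S i * pvec S i = (G.degree i : ℝ) := by
      intro i; unfold pvec; split_ifs <;> ring
    rw [Finset.sum_congr rfl fun i _ => this i, ← Nat.cast_sum,
      SimpleGraph.sum_degrees_eq_twice_card_edges]
    push_cast; ring
  have h2 : ∑ i : V, ∑ j : V, (if G.Adj i j then pvec S i * pvec S j else 0)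
      = 2 * (G.edgeFinset.card : ℝ) - 4 * (cutNum G S : ℝ) := by
    have key : ∀ p : V × V,
        (if G.Adj p.1 p.2 then pvec S p.1 * pvec S p.2 else 0)
          = (if G.Adj p.1 p.2 then (1 : ℝ) else 0)
            - 2 * (if G.Adj p.1 p.2 ∧ p.1 ∈ S ∧ p.2 ∉ S then (1 : ℝ) else 0)
            - 2 * (if G.Adj p.1 p.2 ∧ p.1 ∉ S ∧ p.2 ∈ S then (1 : ℝ) else 0) := by
      rintro ⟨i, j⟩
      unfold pvec
      by_cases hij : G.Adj i j <;> by_cases hi : i ∈ S <;> by_cases hj : j ∈ S <;>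
        simp [hij, hi, hj] <;> ring
    rw [← Finset.sum_product' (s := Finset.univ) (t := Finset.univ), Finset.univ_product_univ]
    rw [Finset.sum_congr rfl fun p _ => key p]
    simp only [Finset.sum_sub_distrib, ← Finset.mul_sum, Finset.sum_boole]
    rw [cutNum_swap]
    have hA : (Finset.univ.filter (fun p : V × V => G.Adj p.1 p.2)).card
        = 2 * G.edgeFinset.card := card_adj_pairs G
    rw [show (Finset.univ.filter (fun p : V × V => G.Adj p.1 p.2)) =
      (Finset.univ.filter (fun p : V × V => G.Adj p.1 p.2)) from rfl, hA]
    unfold cutNum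
    push_cast; ring
  rw [h1, h2]; ring

/-- `mcut(G) ≤ m - n·qₙ(G)/4`. -/
theorem stmt3 (G : SimpleGraph V) [DecidableRel G.Adj] :
    (mcut G : ℝ) ≤ (G.edgeFinset.card : ℝ) - (Fintype.card V : ℝ) * (⨅ i, (isHermitian_signlessLap G).eigenvalues i) / 4 := by
  rcases isEmpty_or_nonempty V with h | h
  · have hm : mcut G = 0 := by
      simp [mcut, cutNum, Finset.univ_eq_empty (α := V × V)]
    rw [hm]
    simp [Fintype.card_eq_zero]
  · obtain ⟨S, -, hS⟩ := Finset.exists_mem_eq_sup (Finset.univ : Finset (Finset V))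
      ⟨∅, Finset.mem_univ _⟩ (fun S => cutNum G S)
    have hray := rayleigh_min (isHermitian_signlessLap G) (pvec S)
    have hx : pvec S ⬝ᵥ pvec S = (Fintype.card V : ℝ) := by
      have : ∀ v : V, pvec S v * pvec S v = 1 := by
        intro v; unfold pvec; split_ifs <;> ring
      rw [dotProduct, Finset.sum_congr rfl fun v _ => this v]
      simp [Finset.card_univ]
    rw [quad_eq, hx] at hray
    have hmc : (mcut G : ℝ) = (cutNum G S : ℝ) := by rw [mcut, hS]
    rw [hmc]
    have hn : (0 : ℝ) ≤ (Fintype.card V : ℝ) := Nat.cast_nonneg _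
    linarith
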